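/- Let W be a Schwartz vector field on ℝⁿ and define the elastic 2-tensor field f = ε(DW ⊗ I), i.e. the elastic symmetrization of ∂_i W_j δ_{kl}. Then for every x ∈ ℝⁿ, every unit vector v, and every q ∈ ℝv ∪ v⊥, the elastic X-ray transform ∫_ℝ ∑_{i,j,k,l} f_{ijkl}(x+tv) v_i q_j v_k q_l dt = 0. -/

import Mathlib

open scoped BigOperators
open MeasureTheory Filter

section Quads
variable {m : ℕ}

private lemma masterKL (r : ℝ) (g : Fin m → Fin m → ℝ) (a b c d : Fin m → ℝ) :
    ∑ i, ∑ j, ∑ k, ∑ l, (r * g i j) * (if k = l then (1:ℝ) else 0) * a i * b j * c k * d l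
      = r * ((∑ i, ∑ j, g i j * a i * b j) * ∑ k, c k * d k) := by
  have step : ∀ i j, (∑ k, ∑ l, (r * g i j) * (if k = l then (1:ℝ) else 0) * a i * b j * c k * d l)
      = (r * g i j) * a i * b j * ∑ k, c k * d k := by
    intro i j
    rw [Finset.mul_sum]
    refine Finset.sum_congr rfl fun k _ => ?_
    rw [Finset.sum_eq_single k]
    · rw [if_pos rfl]; ring
    · intro l _ hlk; rw [if_neg fun h => hlk h.symm]; ring
    · intro h; exact absurd (Finset.mem_univ k) h
  simp only [step]
  rw [Finset.sum_mul, Finset.mul_sum]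
  refine Finset.sum_congr rfl fun i _ => ?_
  rw [Finset.sum_mul, Finset.mul_sum]
  refine Finset.sum_congr rfl fun j _ => ?_
  ring

private lemma masterKL' (r : ℝ) (g : Fin m → Fin m → ℝ) (a b c d : Fin m → ℝ) :
    ∑ i, ∑ j, ∑ k, ∑ l, (r * g j i) * (if k = l then (1:ℝ) else 0) * a i * b j * c k * d l
      = r * ((∑ i, ∑ j, g j i * a i * b j) * ∑ k, c k * d k) :=
  masterKL r (fun p s => g s p) a b c d

private lemma masterLK (r : ℝ) (g : Fin m → Fin m → ℝ) (a b c d : Fin m → ℝ) :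
    ∑ i, ∑ j, ∑ k, ∑ l, (r * g i j) * (if l = k then (1:ℝ) else 0) * a i * b j * c k * d l
      = r * ((∑ i, ∑ j, g i j * a i * b j) * ∑ k, c k * d k) := by
  have step : ∀ i j, (∑ k, ∑ l, (r * g i j) * (if l = k then (1:ℝ) else 0) * a i * b j * c k * d l)
      = (r * g i j) * a i * b j * ∑ k, c k * d k := by
    intro i j
    rw [Finset.mul_sum]
    refine Finset.sum_congr rfl fun k _ => ?_
    rw [Finset.sum_eq_single k]
    · rw [if_pos rfl]; ring
    · intro l _ hlk; rw [if_neg hlk]; ring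
    · intro h; exact absurd (Finset.mem_univ k) h
  simp only [step]
  rw [Finset.sum_mul, Finset.mul_sum]
  refine Finset.sum_congr rfl fun i _ => ?_
  rw [Finset.sum_mul, Finset.mul_sum]
  refine Finset.sum_congr rfl fun j _ => ?_
  ring

private lemma masterLK' (r : ℝ) (g : Fin m → Fin m → ℝ) (a b c d : Fin m → ℝ) :
    ∑ i, ∑ j, ∑ k, ∑ l, (r * g j i) * (if l = k then (1:ℝ) else 0) * a i * b j * c k * d l
      = r * ((∑ i, ∑ j, g j i * a i * b j) * ∑ k, c k * d k) :=
  masterLK r (fun p s => g s p) a b c d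

private lemma masterIJ (r : ℝ) (g : Fin m → Fin m → ℝ) (a b c d : Fin m → ℝ) :
    ∑ i, ∑ j, ∑ k, ∑ l, (if i = j then (1:ℝ) else 0) * (r * g k l) * a i * b j * c k * d l
      = r * ((∑ i, ∑ j, g i j * c i * d j) * ∑ k, a k * b k) := by
  have step : ∀ i j, (∑ k, ∑ l, (if i = j then (1:ℝ) else 0) * (r * g k l) * a i * b j * c k * d l)
      = (if i = j then (1:ℝ) else 0) * (a i * b j * (r * ∑ k, ∑ l, g k l * c k * d l)) := by
    intro i j
    by_cases h : i = j
    · rw [if_pos h]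
      have e : ∀ k l, (1:ℝ) * (r * g k l) * a i * b j * c k * d l
          = (a i * b j * r) * (g k l * c k * d l) := fun k l => by ring
      simp only [e, ← Finset.mul_sum]
      ring
    · rw [if_neg h]; simp
  simp only [step]
  simp only [ite_mul, one_mul, zero_mul, Finset.sum_ite_eq, Finset.mem_univ, if_true]
  rw [← Finset.sum_mul]
  ring

private lemma masterIJ' (r : ℝ) (g : Fin m → Fin m → ℝ) (a b c d : Fin m → ℝ) :
    ∑ i, ∑ j, ∑ k, ∑ l, (if i = j then (1:ℝ) else 0) * (r * g l k) * a i * b j * c k * d l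
      = r * ((∑ i, ∑ j, g j i * c i * d j) * ∑ k, a k * b k) :=
  masterIJ r (fun p s => g s p) a b c d

private lemma masterJI (r : ℝ) (g : Fin m → Fin m → ℝ) (a b c d : Fin m → ℝ) :
    ∑ i, ∑ j, ∑ k, ∑ l, (if j = i then (1:ℝ) else 0) * (r * g k l) * a i * b j * c k * d l
      = r * ((∑ i, ∑ j, g i j * c i * d j) * ∑ k, a k * b k) := by
  have step : ∀ i j, (∑ k, ∑ l, (if j = i then (1:ℝ) else 0) * (r * g k l) * a i * b j * c k * d l)
      = (if j = i then (1:ℝ) else 0) * (a i * b j * (r * ∑ k, ∑ l, g k l * c k * d l)) := by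
    intro i j
    by_cases h : j = i
    · rw [if_pos h]
      have e : ∀ k l, (1:ℝ) * (r * g k l) * a i * b j * c k * d l
          = (a i * b j * r) * (g k l * c k * d l) := fun k l => by ring
      simp only [e, ← Finset.mul_sum]
      ring
    · rw [if_neg h]; simp
  simp only [step]
  simp only [ite_mul, one_mul, zero_mul, Finset.sum_ite_eq', Finset.mem_univ, if_true]
  rw [← Finset.sum_mul]
  ring

private lemma masterJI' (r : ℝ) (g : Fin m → Fin m → ℝ) (a b c d : Fin m → ℝ) :
    ∑ i, ∑ j, ∑ k, ∑ l, (if j = i then (1:ℝ) else 0) * (r * g l k) * a i * b j * c k * d l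
      = r * ((∑ i, ∑ j, g j i * c i * d j) * ∑ k, a k * b k) :=
  masterJI r (fun p s => g s p) a b c d

private lemma contract_all (D : Fin m → Fin m → ℝ) (v q : Fin m → ℝ) :
    (∑ i, ∑ j, ∑ k, ∑ l, (1/8 : ℝ) *
      (D i j * (if k = l then (1:ℝ) else 0) + D j i * (if k = l then (1:ℝ) else 0)
        + D i j * (if l = k then (1:ℝ) else 0) + D j i * (if l = k then (1:ℝ) else 0)
        + D k l * (if i = j then (1:ℝ) else 0) + D l k * (if i = j then (1:ℝ) else 0)
        + D k l * (if j = i then (1:ℝ) else 0) + D l k * (if j = i then (1:ℝ) else 0))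
      * v i * q j * v k * q l)
    = 1/2 * ((∑ i, ∑ j, D i j * v i * q j) + (∑ i, ∑ j, D j i * v i * q j)) * (∑ k, v k * q k) := by
  have expand : ∀ i j k l : Fin m, (1/8 : ℝ) *
      (D i j * (if k = l then (1:ℝ) else 0) + D j i * (if k = l then (1:ℝ) else 0)
        + D i j * (if l = k then (1:ℝ) else 0) + D j i * (if l = k then (1:ℝ) else 0)
        + D k l * (if i = j then (1:ℝ) else 0) + D l k * (if i = j then (1:ℝ) else 0)
        + D k l * (if j = i then (1:ℝ) else 0) + D l k * (if j = i then (1:ℝ) else 0))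
      * v i * q j * v k * q l
      = ((1/8 : ℝ) * D i j) * (if k = l then (1:ℝ) else 0) * v i * q j * v k * q l
        + ((1/8 : ℝ) * D j i) * (if k = l then (1:ℝ) else 0) * v i * q j * v k * q l
        + ((1/8 : ℝ) * D i j) * (if l = k then (1:ℝ) else 0) * v i * q j * v k * q l
        + ((1/8 : ℝ) * D j i) * (if l = k then (1:ℝ) else 0) * v i * q j * v k * q l
        + (if i = j then (1:ℝ) else 0) * ((1/8 : ℝ) * D k l) * v i * q j * v k * q l
        + (if i = j then (1:ℝ) else 0) * ((1/8 : ℝ) * D l k) * v i * q j * v k * q l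
        + (if j = i then (1:ℝ) else 0) * ((1/8 : ℝ) * D k l) * v i * q j * v k * q l
        + (if j = i then (1:ℝ) else 0) * ((1/8 : ℝ) * D l k) * v i * q j * v k * q l := by
    intros; ring
  simp only [expand, Finset.sum_add_distrib]
  rw [masterKL (1/8 : ℝ) D v q v q, masterKL' (1/8 : ℝ) D v q v q,
    masterLK (1/8 : ℝ) D v q v q, masterLK' (1/8 : ℝ) D v q v q,
    masterIJ (1/8 : ℝ) D v q v q, masterIJ' (1/8 : ℝ) D v q v q,
    masterJI (1/8 : ℝ) D v q v q, masterJI' (1/8 : ℝ) D v q v q]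
  ring

end Quads

private lemma schwartz_integral_deriv (G : SchwartzMap ℝ ℝ) : ∫ t : ℝ, deriv (⇑G) t = 0 := by
  have hint : Integrable (fun t : ℝ => deriv (⇑G) t) volume :=
    (SchwartzMap.derivCLM ℝ ℝ G).integrable.congr
      (Filter.Eventually.of_forall fun t => by simp [SchwartzMap.derivCLM_apply])
  have hcont : ∀ s : ℝ, HasDerivAt (⇑G) (deriv (⇑G) s) s := fun s =>
    G.differentiable.differentiableAt.hasDerivAt
  have hco : Tendsto (⇑G) (cocompact ℝ) (nhds 0) :=
    ZeroAtInftyContinuousMapClass.zero_at_infty G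
  rw [cocompact_eq_atBot_atTop] at hco
  have htop : Tendsto (⇑G) atTop (nhds 0) := hco.mono_left le_sup_right
  have hbot : Tendsto (⇑G) atBot (nhds 0) := hco.mono_left le_sup_left
  have h1 : ∫ t in Set.Ioi (0:ℝ), deriv (⇑G) t = 0 - G 0 :=
    MeasureTheory.integral_Ioi_of_hasDerivAt_of_tendsto
      (G.continuous.continuousWithinAt) (fun s _ => hcont s) hint.integrableOn htop
  have h2 : ∫ t in Set.Iic (0:ℝ), deriv (⇑G) t = G 0 - 0 :=
    MeasureTheory.integral_Iic_of_hasDerivAt_of_tendsto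
      (G.continuous.continuousWithinAt) (fun s _ => hcont s) hint.integrableOn hbot
  rw [← intervalIntegral.integral_Iic_add_Ioi (b := (0:ℝ)) hint.integrableOn hint.integrableOn,
    h1, h2]
  ring

section Line
variable {n : ℕ} (x v : EuclideanSpace ℝ (Fin n))

private lemma line_hasDerivAt (t : ℝ) : HasDerivAt (fun s : ℝ => x + s • v) v t := by
  simpa using ((hasDerivAt_id t).smul_const v).const_add x

private lemma line_temperate : Function.HasTemperateGrowth (fun t : ℝ => x + t • v) := by
  apply Function.HasTemperateGrowth.of_fderiv (k := 1) (C := ‖x‖ + ‖v‖ + 1)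
  · have h : (fderiv ℝ (fun s : ℝ => x + s • v))
        = fun _ : ℝ => ContinuousLinearMap.smulRight (1 : ℝ →L[ℝ] ℝ) v :=
      funext fun t => (line_hasDerivAt x v t).hasFDerivAt.fderiv
    rw [h]
    exact Function.HasTemperateGrowth.const _
  · exact fun t => (line_hasDerivAt x v t).differentiableAt
  · intro t
    have h1 : ‖x + t • v‖ ≤ ‖x‖ + ‖t‖ * ‖v‖ := by
      refine (norm_add_le _ _).trans ?_
      rw [norm_smul]
    calc ‖x + t • v‖ ≤ ‖x‖ + ‖t‖ * ‖v‖ := h1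
      _ ≤ (‖x‖ + ‖v‖ + 1) * (1 + ‖t‖) ^ 1 := by
          nlinarith [norm_nonneg x, norm_nonneg (t:ℝ), norm_nonneg v]

private lemma line_antilipschitz (hv : ‖v‖ = 1) :
    AntilipschitzWith 1 (fun t : ℝ => x + t • v) := by
  refine AntilipschitzWith.of_le_mul_dist fun s t => ?_
  rw [dist_eq_norm, dist_eq_norm]
  have h : (x + s • v) - (x + t • v) = (s - t) • v := by
    rw [add_sub_add_left_eq_sub, ← sub_smul]
  rw [h, norm_smul, hv]
  simp

end Line


/-- For a Schwartz vector field `W` on ℝⁿ, the elastic 2-tensor field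
`f = ε(DW ⊗ I)` (elastic symmetrization of `∂_i W_j δ_{kl}`) has vanishing elastic
X-ray transform: for every `x`, unit `v` and `q ∈ ℝv ∪ v⊥`,
`∫ ∑ f_{ijkl}(x+tv) v_i q_j v_k q_l dt = 0`. -/
theorem K_in_kernel (n : ℕ)
    (W : Fin n → SchwartzMap (EuclideanSpace ℝ (Fin n)) ℝ)
    (T : Fin n → Fin n → Fin n → Fin n → EuclideanSpace ℝ (Fin n) → ℝ)
    (hT : T = fun i j k l x =>
      fderiv ℝ (W j) x (EuclideanSpace.single i 1) * (if k = l then (1:ℝ) else 0))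
    (f : Fin n → Fin n → Fin n → Fin n → EuclideanSpace ℝ (Fin n) → ℝ)
    (hf : f = fun i j k l x => (1/8) *
      (T i j k l x + T j i k l x + T i j l k x + T j i l k x
        + T k l i j x + T l k i j x + T k l j i x + T l k j i x))
    (x v q : EuclideanSpace ℝ (Fin n)) (hv : ‖v‖ = 1)
    (hq : (∃ t : ℝ, q = t • v) ∨ inner ℝ q v = (0:ℝ)) :
    (∫ t : ℝ, ∑ i, ∑ j, ∑ k, ∑ l,
      f i j k l (x + t • v) * v i * q j * v k * q l) = 0 := by
  subst hf; subst hT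
  simp only []
  have hkey := fun t : ℝ => contract_all
    (fun a b => fderiv ℝ (⇑(W b)) (x + t • v) (EuclideanSpace.single a 1)) v q
  rcases hq with ⟨t₀, hq0⟩ | hqv
  · -- q = t₀ • v
    -- basis expansion
    have hb : v = ∑ i, v i • EuclideanSpace.single i (1:ℝ) := by
      have h := (EuclideanSpace.basisFun (Fin n) ℝ).sum_repr v
      simp only [EuclideanSpace.basisFun_apply, EuclideanSpace.basisFun_repr] at h
      exact h.symm
    have hCLM : ∀ L : EuclideanSpace ℝ (Fin n) →L[ℝ] ℝ,
        L v = ∑ i, v i * L (EuclideanSpace.single i 1) := by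
      intro L
      conv_lhs => rw [hb]
      rw [map_sum]
      exact Finset.sum_congr rfl fun i _ => by rw [L.map_smul]; rfl
    have hfd_sum : ∀ (j : Fin n) (t : ℝ), fderiv ℝ (⇑(W j)) (x + t • v) v
        = ∑ i, v i * fderiv ℝ (⇑(W j)) (x + t • v) (EuclideanSpace.single i 1) :=
      fun j t => hCLM (fderiv ℝ (⇑(W j)) (x + t • v))
    have hGs : ∀ j : Fin n, ∃ G : SchwartzMap ℝ ℝ, ∀ t : ℝ, G t = W j (x + t • v) := fun j =>
      ⟨SchwartzMap.compCLMOfAntilipschitz ℝ (line_temperate x v) (line_antilipschitz x v hv)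
        (W j), fun t => by simp [SchwartzMap.compCLMOfAntilipschitz_apply]⟩
    choose G hG using hGs
    have hDeriv : ∀ (j : Fin n) (t : ℝ),
        HasDerivAt (⇑(G j)) (fderiv ℝ (⇑(W j)) (x + t • v) v) t := by
      intro j t
      have h1 : HasDerivAt (fun s : ℝ => W j (x + s • v))
          ((fderiv ℝ (⇑(W j)) (x + t • v)) v) t :=
        ((W j).differentiable.differentiableAt.hasFDerivAt).comp_hasDerivAt t
          (line_hasDerivAt x v t)
      have h2 : ⇑(G j) = fun s : ℝ => W j (x + s • v) := funext (hG j)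
      rw [h2]; exact h1
    have hderiv_eq : ∀ (j : Fin n) (t : ℝ),
        deriv (⇑(G j)) t = fderiv ℝ (⇑(W j)) (x + t • v) v := fun j t => (hDeriv j t).deriv
    have hInt : ∀ j : Fin n, Integrable (fun t : ℝ => deriv (⇑(G j)) t) volume := fun j =>
      (SchwartzMap.derivCLM ℝ ℝ (G j)).integrable.congr
        (Filter.Eventually.of_forall fun t => by simp [SchwartzMap.derivCLM_apply])
    have hqk : ∀ k : Fin n, q k = t₀ * v k := fun k => by rw [hq0]; rfl
    have hnorm : (∑ k : Fin n, v k * v k) = 1 := by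
      have h := real_inner_self_eq_norm_mul_norm v
      rw [hv, one_mul, PiLp.inner_apply] at h
      simpa [PiLp.inner_apply, RCLike.inner_apply, conj_trivial, pow_two] using h
    have hkey3 : ∀ t : ℝ, _ = t₀ ^ 2 * ∑ j, v j * deriv (⇑(G j)) t := fun t =>
      (hkey t).trans (by
        simp only [hqk]
        have hA : ∑ i, ∑ j, fderiv ℝ (⇑(W j)) (x + t • v) (EuclideanSpace.single i 1)
              * v i * (t₀ * v j)
            = t₀ * ∑ j, v j * fderiv ℝ (⇑(W j)) (x + t • v) v := by
          rw [Finset.sum_comm, Finset.mul_sum]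
          refine Finset.sum_congr rfl fun j _ => ?_
          rw [hfd_sum j t, Finset.mul_sum, Finset.mul_sum]
          exact Finset.sum_congr rfl fun i _ => by ring
        have hB : ∑ i, ∑ j, fderiv ℝ (⇑(W i)) (x + t • v) (EuclideanSpace.single j 1)
              * v i * (t₀ * v j)
            = t₀ * ∑ j, v j * fderiv ℝ (⇑(W j)) (x + t • v) v := by
          rw [Finset.mul_sum]
          refine Finset.sum_congr rfl fun i _ => ?_
          rw [hfd_sum i t, Finset.mul_sum, Finset.mul_sum]
          exact Finset.sum_congr rfl fun j _ => by ring
        have hcc : (∑ k : Fin n, v k * (t₀ * v k)) = t₀ := by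
          have h : (∑ k : Fin n, v k * (t₀ * v k)) = t₀ * ∑ k : Fin n, v k * v k := by
            rw [Finset.mul_sum]
            exact Finset.sum_congr rfl fun k _ => by ring
          rw [h, hnorm, mul_one]
        rw [hA, hB, hcc]
        simp only [hderiv_eq]
        ring)
    simp only [hkey3]
    rw [MeasureTheory.integral_const_mul,
      MeasureTheory.integral_finset_sum _ fun j _ => (hInt j).const_mul (v j)]
    have hz : ∀ j ∈ Finset.univ, (∫ t : ℝ, v j * deriv (⇑(G j)) t) = (0:ℝ) := fun j _ => by
      rw [MeasureTheory.integral_const_mul, schwartz_integral_deriv, mul_zero]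
    rw [Finset.sum_eq_zero hz, mul_zero]
  · -- inner q v = 0
    have h0 : (∑ k : Fin n, q k * v k) = 0 := by
      simpa [PiLp.inner_apply, RCLike.inner_apply, conj_trivial, mul_comm] using hqv
    have hc : (∑ k : Fin n, v k * q k) = 0 := by
      rw [← h0]
      exact Finset.sum_congr rfl fun k _ => mul_comm _ _
    simp only [hkey, hc, mul_zero, integral_zero]
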